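/- Let $\mu_1, \dots, \mu_{k+1}$ be positive reals with $\mu_1 \le \cdots \le \mu_{k+1}$ satisfying $\sum_{i=1}^k (\mu_{k+1}-\mu_i)^2 \le \frac{4}{n}\sum_{i=1}^k \mu_i(\mu_{k+1}-\mu_i)$ for some real $n > 0$. Then $\mu_{k+1} \le (1 + \tfrac{4}{n})\Lambda_k$, where $\Lambda_k = \frac{1}{k}\sum_{i=1}^k \mu_i$. -/

import Mathlib

open scoped BigOperators

/-- Inequality (4.15): if positive reals `μ₁ ≤ ⋯ ≤ μ_{k+1}` satisfy
`∑_{i=1}^k (μ_{k+1}-μ_i)² ≤ (4/n) ∑_{i=1}^k μ_i (μ_{k+1}-μ_i)` for some `n > 0`,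
then `μ_{k+1} ≤ (1+4/n) Λ_k`, where `Λ_k` is the mean of `μ₁, …, μ_k`. -/
theorem mu_succ_le (k : ℕ) (hk : 1 ≤ k) (n : ℝ) (hn : 0 < n) (mu : ℕ → ℝ)
    (hpos : ∀ i, 1 ≤ i → i ≤ k + 1 → 0 < mu i)
    (hmono : ∀ i j, 1 ≤ i → i ≤ j → j ≤ k + 1 → mu i ≤ mu j)
    (hineq : ∑ i ∈ Finset.Icc 1 k, (mu (k + 1) - mu i) ^ 2
      ≤ 4 / n * ∑ i ∈ Finset.Icc 1 k, mu i * (mu (k + 1) - mu i)) :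
    mu (k + 1) ≤ (1 + 4 / n) * ((1 / (k : ℝ)) * ∑ i ∈ Finset.Icc 1 k, mu i) := by
  set S := ∑ i ∈ Finset.Icc 1 k, mu i with hS
  set T := ∑ i ∈ Finset.Icc 1 k, (mu i) ^ 2 with hT
  set μ := mu (k + 1) with hμ
  have hcard : (Finset.Icc 1 k).card = k := by simp
  have hkR : (0 : ℝ) < k := by exact_mod_cast hk
  have hSpos : 0 < S := Finset.sum_pos (fun i hi => by
      simp only [Finset.mem_Icc] at hi
      exact hpos i hi.1 (hi.2.trans (Nat.le_succ k))) (by simp [hk])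
  -- Cauchy-Schwarz: S^2 ≤ k * T
  have hCS : S ^ 2 ≤ (k : ℝ) * T := by
    have h := sq_sum_le_card_mul_sum_sq (s := Finset.Icc 1 k) (f := mu)
    simpa [hcard] using h
  -- Rewrite sums in hineq
  have h1 : ∑ i ∈ Finset.Icc 1 k, (μ - mu i) ^ 2 = (k:ℝ) * μ ^ 2 - 2 * μ * S + T := by
    rw [Finset.sum_congr rfl (fun i _ => by ring_nf : ∀ i ∈ Finset.Icc 1 k,
      (μ - mu i) ^ 2 = μ ^ 2 - 2 * μ * mu i + (mu i) ^ 2)]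
    rw [Finset.sum_add_distrib, Finset.sum_sub_distrib, Finset.sum_const, hcard,
      ← Finset.mul_sum]
    ring
  have h2 : ∑ i ∈ Finset.Icc 1 k, mu i * (μ - mu i) = μ * S - T := by
    rw [Finset.sum_congr rfl (fun i _ => by ring : ∀ i ∈ Finset.Icc 1 k,
      mu i * (μ - mu i) = μ * mu i - (mu i) ^ 2)]
    rw [Finset.sum_sub_distrib, ← Finset.mul_sum]
  rw [h1, h2] at hineq
  -- clear denominator n
  have hq : n * ((k:ℝ) * μ ^ 2 - 2 * μ * S + T) ≤ 4 * (μ * S - T) := by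
    have := mul_le_mul_of_nonneg_left hineq hn.le
    calc n * ((k:ℝ) * μ ^ 2 - 2 * μ * S + T) ≤ n * (4 / n * (μ * S - T)) := this
      _ = 4 * (μ * S - T) := by field_simp
  -- quadratic inequality in μ with T replaced via Cauchy-Schwarz
  have hq2 : n * (k:ℝ)^2 * μ ^ 2 - (2*n + 4) * (k:ℝ) * S * μ + (n + 4) * S ^ 2 ≤ 0 := by
    nlinarith [mul_le_mul_of_nonneg_left hCS (by linarith : (0:ℝ) ≤ n + 4)]
  have key : ((k:ℝ) * μ - S) * (n * (k:ℝ) * μ - (n + 4) * S) ≤ 0 := by nlinarith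
  have h3 : n * (k:ℝ) * μ ≤ (n + 4) * S := by nlinarith
  rw [show (1 + 4/n) * (1/(k:ℝ) * S) = ((n+4)*S)/(n*(k:ℝ)) by field_simp,
    le_div_iff₀ (by positivity)]
  nlinarith [h3]
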